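/- (Δ_X is smooth if and only if p = 2.) The projective plane curve defined by F := σ(x₀,x₁) − x₂^p has a singular point over 𝕜 — that is, there exists (x₀,x₁,x₂) ∈ 𝕜³ ∖ {(0,0,0)} at which F and all three partial derivatives ∂_{x₀}F, ∂_{x₁}F, ∂_{x₂}F vanish — if and only if p ≥ 3. -/

import Mathlib

open MvPolynomial Finset

/-- **Δ_X is smooth iff p = 2.**  Let `p` be a prime, `𝕜` an algebraically
closed field of characteristic `p`, and `σ(A,B) = ∑_{i=1}^{p-1} σ_i A^i B^{p-i}` with
`σ_1 = σ_{p-1} = 1`.  The projective plane curve `F = σ(x₀,x₁) − x₂^p` has a singular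
point over `𝕜` — a nonzero `(x₀,x₁,x₂) ∈ 𝕜³` where `F` and all three partial derivatives
vanish — if and only if `p ≥ 3`. -/
theorem boundary_singular_iff_p_ge_three
    (p : ℕ) (hp : p.Prime) (𝕜 : Type*) [Field 𝕜] [IsAlgClosed 𝕜] [CharP 𝕜 p]
    (s : ℕ → 𝕜) (hs1 : s 1 = 1) (hsp : s (p - 1) = 1) :
    (∃ v : Fin 3 → 𝕜, v ≠ 0 ∧
        eval v ((∑ i ∈ Ioo 0 p, (C (s i) : MvPolynomial (Fin 3) 𝕜) *
            X 0 ^ i * X 1 ^ (p - i)) - X 2 ^ p) = 0 ∧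
        ∀ j : Fin 3,
          eval v (pderiv j ((∑ i ∈ Ioo 0 p, (C (s i) : MvPolynomial (Fin 3) 𝕜) *
              X 0 ^ i * X 1 ^ (p - i)) - X 2 ^ p)) = 0)
      ↔ 3 ≤ p := by
  have hp0 : (p : 𝕜) = 0 := CharP.cast_eq_zero 𝕜 p
  constructor
  · rintro ⟨v, hv, hF, hD⟩
    by_contra h3
    have h2 : p = 2 := by have := hp.two_le; omega
    subst h2
    have hIoo : Ioo 0 2 = {1} := rfl
    rw [hIoo] at hF hD
    have hv1 : v 1 = 0 := by
      have := hD 0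
      simpa [pderiv_C_mul, pderiv_mul, pderiv_pow, hs1] using this
    have hv0 : v 0 = 0 := by
      have := hD 1
      simpa [pderiv_C_mul, pderiv_mul, pderiv_pow, hs1] using this
    have hv2 : v 2 = 0 := by
      have := hF
      simp [hs1, hv0, hv1] at this
      simpa using this
    apply hv
    funext i
    fin_cases i <;> assumption
  · intro h3
    set g : Polynomial 𝕜 := ∑ i ∈ Ioo 0 p, Polynomial.C ((i : 𝕜) * s i) * Polynomial.X ^ (i - 1)
      with hg
    have hmem : p - 1 ∈ Ioo 0 p := by rw [mem_Ioo]; omega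
    have hcoeff : g.coeff (p - 2) = -1 := by
      rw [hg, Polynomial.finset_sum_coeff]
      rw [Finset.sum_eq_single (p - 1)]
      · simp only [Polynomial.coeff_C_mul, Polynomial.coeff_X_pow]
        rw [if_pos (by omega), Nat.cast_sub hp.one_le, hp0, hsp]
        ring
      · intro i hi hne
        rw [mem_Ioo] at hi
        simp only [Polynomial.coeff_C_mul, Polynomial.coeff_X_pow]
        rw [if_neg (by omega)]
        ring
      · intro h; exact absurd hmem h
    have hdeg : g.degree ≠ 0 := by
      intro h
      have hle := Polynomial.le_degree_of_ne_zero (n := p - 2) (by rw [hcoeff]; simp)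
      rw [h] at hle
      have : ((p - 2 : ℕ) : WithBot ℕ) ≤ ((0 : ℕ) : WithBot ℕ) := by exact_mod_cast hle
      rw [Nat.cast_le] at this
      omega
    obtain ⟨t, ht⟩ := IsAlgClosed.exists_root g hdeg
    have h0 : ∑ i ∈ Ioo 0 p, (i : 𝕜) * s i * t ^ (i - 1) = 0 := by
      have := ht
      rw [Polynomial.IsRoot, hg, Polynomial.eval_finset_sum] at this
      simpa using this
    have h1 : ∑ i ∈ Ioo 0 p, (i : 𝕜) * s i * t ^ i = 0 := by
      have e : ∑ i ∈ Ioo 0 p, (i : 𝕜) * s i * t ^ i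
          = (∑ i ∈ Ioo 0 p, (i : 𝕜) * s i * t ^ (i - 1)) * t := by
        rw [Finset.sum_mul]
        refine Finset.sum_congr rfl fun i hi => ?_
        rw [mem_Ioo] at hi
        have e2 : t ^ i = t ^ (i - 1) * t := by
          rw [← pow_succ, Nat.sub_add_cancel hi.1]
        rw [e2]; ring
      rw [e, h0, zero_mul]
    obtain ⟨y, hy⟩ := IsAlgClosed.exists_pow_nat_eq (∑ i ∈ Ioo 0 p, s i * t ^ i) hp.pos
    refine ⟨![t, 1, y], ?_, ?_, ?_⟩
    · intro h
      simpa using congrFun h 1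
    · simp only [map_sub, map_sum, map_mul, map_pow, eval_C, eval_X]
      simp [hy]
    · intro j
      fin_cases j <;>
        simp only [map_sub, map_sum, pderiv_C_mul, pderiv_mul, pderiv_pow, pderiv_X,
          map_mul, map_pow, map_add, eval_C, eval_X, map_natCast, Pi.single_apply] <;>
        simp [Fin.ext_iff]
      · -- j = 0
        calc ∑ x ∈ Ioo 0 p, s x * (↑x * t ^ (x - 1))
            = ∑ x ∈ Ioo 0 p, (x : 𝕜) * s x * t ^ (x - 1) := by
              refine Finset.sum_congr rfl fun i hi => by ring
          _ = 0 := h0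
      · -- j = 1
        calc ∑ x ∈ Ioo 0 p, s x * t ^ x * ((p - x : ℕ) : 𝕜)
            = ∑ x ∈ Ioo 0 p, -((x : 𝕜) * s x * t ^ x) := by
              refine Finset.sum_congr rfl fun i hi => ?_
              rw [mem_Ioo] at hi
              rw [Nat.cast_sub hi.2.le, hp0, zero_sub]
              ring
          _ = -∑ x ∈ Ioo 0 p, (x : 𝕜) * s x * t ^ x := by rw [Finset.sum_neg_distrib]
          _ = 0 := by rw [h1, neg_zero]
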